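/- For each proper suit F of a d-box X (a partition of X into pairwise dichotomous proper boxes) and each box C = C_1 × ... × C_d with some C_i ≠ X_i: the index of F relative to C, defined as Σ_{A∈F} Π_i ([A_i = C_i] − [A_i = X_i\C_i] + [C_i = X_i]), equals 0. In particular, if C is a proper box, the number of boxes of F belonging to {C^ε : ε ∈ {0,1}^d} (where C^ε flips the i-th factor to its complement whenever ε_i = 1) is even. -/

import Mathlib

open Finset
open scoped symmDiff

namespace Stmt16Aux

variable {α : Type*} [Fintype α] [DecidableEq α]

/-- character `(-1)^{|V ∩ R|}` -/
def chi (V R : Finset α) : ℤ := (-1) ^ ((V ∩ R).card)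

/-- indicator of `|S ∩ R|` odd -/
def eodd (S R : Finset α) : ℤ := if Odd ((S ∩ R).card) then 1 else 0

/-- odd-cardinality subsets -/
def Odds (α : Type*) [Fintype α] [DecidableEq α] : Finset (Finset α) :=
  univ.filter (fun R => Odd R.card)

lemma symmDiff_inter_right (V W R : Finset α) :
    (V ∆ W) ∩ R = (V ∩ R) ∆ (W ∩ R) := by
  ext x; simp only [mem_inter, Finset.mem_symmDiff]; tauto

lemma chi_mul (V W R : Finset α) : chi V R * chi W R = chi (V ∆ W) R := by
  unfold chi
  rw [← pow_add, symmDiff_inter_right]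
  set P := V ∩ R
  set Q := W ∩ R
  have hu : (P ∆ Q).card = (P \ Q).card + (Q \ P).card := by
    rw [symmDiff_def, Finset.sup_eq_union]
    exact card_union_of_disjoint disjoint_sdiff_sdiff
  have hp := card_sdiff_add_card_inter P Q
  have hq := card_sdiff_add_card_inter Q P
  rw [inter_comm Q P] at hq
  have h1 : P.card + Q.card = (P ∆ Q).card + 2 * (P ∩ Q).card := by omega
  rw [h1, pow_add, pow_mul]
  norm_num

lemma univ_symmDiff (V : Finset α) : (univ : Finset α) ∆ V = Vᶜ := by
  rw [← Finset.top_eq_univ, top_symmDiff]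
  exact rfl

lemma sum_chi (V : Finset α) :
    (∑ R : Finset α, chi V R) = if V = ∅ then (2:ℤ) ^ Fintype.card α else 0 := by
  split_ifs with h
  · subst h
    have h1 : ∀ R : Finset α, chi (∅ : Finset α) R = 1 := by
      intro R; unfold chi; simp
    rw [Finset.sum_congr rfl fun R _ => h1 R]
    simp [Finset.card_univ, Fintype.card_finset]
  · obtain ⟨a, ha⟩ := nonempty_iff_ne_empty.mpr h
    have key : ∀ R : Finset α, a ∉ R → chi V (insert a R) = - chi V R := by
      intro R haR
      unfold chi
      have h2 : V ∩ insert a R = insert a (V ∩ R) := by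
        ext x
        simp only [mem_inter, mem_insert]
        constructor
        · rintro ⟨hxV, hx | hxR⟩
          · exact Or.inl hx
          · exact Or.inr ⟨hxV, hxR⟩
        · rintro (rfl | ⟨hxV, hxR⟩)
          · exact ⟨ha, Or.inl rfl⟩
          · exact ⟨hxV, Or.inr hxR⟩
      have h3 : a ∉ V ∩ R := fun hx => haR (mem_inter.mp hx).2
      rw [h2, card_insert_of_notMem h3, pow_succ]
      ring
    refine Finset.sum_involution
      (fun R _ => if a ∈ R then R.erase a else insert a R) ?_ ?_ (fun R _ => mem_univ _) ?_
    · intro R _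
      by_cases haR : a ∈ R
      · simp only [if_pos haR]
        have h4 := key (R.erase a) (notMem_erase a R)
        rw [insert_erase haR] at h4
        rw [h4]; ring
      · simp only [if_neg haR]
        rw [key R haR]; ring
    · intro R _ _
      by_cases haR : a ∈ R
      · rw [if_pos haR]
        intro h5
        exact (notMem_erase a R) (h5.symm ▸ haR)
      · rw [if_neg haR]
        intro h5
        exact haR (h5 ▸ mem_insert_self a R)
    · intro R _
      by_cases haR : a ∈ R
      · rw [if_pos haR, if_neg (notMem_erase a R), insert_erase haR]
      · rw [if_neg haR, if_pos (mem_insert_self a R), erase_insert haR]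

lemma chi_univ_eq (R : Finset α) : chi univ R = if Odd R.card then -1 else 1 := by
  unfold chi
  rw [univ_inter]
  split_ifs with h
  · exact h.neg_one_pow
  · exact (Nat.not_odd_iff_even.mp h).neg_one_pow

lemma two_mul_sum_odds (F : Finset α → ℤ) :
    (2:ℤ) * ∑ R ∈ Odds α, F R = ∑ R : Finset α, (1 - chi univ R) * F R := by
  calc (2:ℤ) * ∑ R ∈ Odds α, F R = ∑ R ∈ Odds α, 2 * F R := by rw [Finset.mul_sum]
    _ = ∑ R : Finset α, if Odd R.card then 2 * F R else 0 := Finset.sum_filter _ _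
    _ = ∑ R : Finset α, (1 - chi univ R) * F R := by
        refine sum_congr rfl fun R _ => ?_
        rw [chi_univ_eq]
        split_ifs <;> ring

lemma two_mul_eodd (S R : Finset α) : (2:ℤ) * eodd S R = 1 - chi S R := by
  unfold eodd chi
  split_ifs with h
  · rw [h.neg_one_pow]; ring
  · rw [(Nat.not_odd_iff_even.mp h).neg_one_pow]; ring

lemma compl_ne_empty {C : Finset α} (h : C ≠ univ) : Cᶜ ≠ ∅ := by
  intro h2
  apply h
  have := congrArg (fun s : Finset α => sᶜ) h2
  simpa [compl_compl] using this

lemma sum_odds_chi (C : Finset α) (h1 : C ≠ ∅) (h2 : C ≠ univ) :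
    ∑ R ∈ Odds α, chi C R = 0 := by
  have key : (2:ℤ) * ∑ R ∈ Odds α, chi C R = 0 := by
    rw [two_mul_sum_odds]
    have h3 : ∀ R : Finset α, (1 - chi univ R) * chi C R = chi C R - chi Cᶜ R := by
      intro R
      rw [sub_mul, one_mul, chi_mul, univ_symmDiff]
    rw [sum_congr rfl fun R _ => h3 R, Finset.sum_sub_distrib, sum_chi, sum_chi,
      if_neg h1, if_neg (compl_ne_empty h2), sub_zero]
  linarith

lemma sum_odds_eodd (S : Finset α) (h1 : S ≠ ∅) (h2 : S ≠ univ) :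
    (4:ℤ) * ∑ R ∈ Odds α, eodd S R = 2 ^ Fintype.card α := by
  have hU : (univ : Finset α) ≠ ∅ := by
    obtain ⟨a, ha⟩ := nonempty_iff_ne_empty.mpr h1
    exact ne_empty_of_mem (mem_univ a)
  have step : (4:ℤ) * ∑ R ∈ Odds α, eodd S R
      = ∑ R : Finset α, (1 - chi univ R) * (1 - chi S R) := by
    have h2m := two_mul_sum_odds (fun R => eodd S R)
    calc (4:ℤ) * ∑ R ∈ Odds α, eodd S R
        = 2 * (2 * ∑ R ∈ Odds α, eodd S R) := by ring
      _ = 2 * ∑ R : Finset α, (1 - chi univ R) * eodd S R := by rw [h2m]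
      _ = ∑ R : Finset α, 2 * ((1 - chi univ R) * eodd S R) := by rw [Finset.mul_sum]
      _ = ∑ R : Finset α, (1 - chi univ R) * (1 - chi S R) := by
          refine sum_congr rfl fun R _ => ?_
          rw [← two_mul_eodd S R]; ring
  rw [step]
  have expand : ∀ R : Finset α, (1 - chi univ R) * (1 - chi S R)
      = (1 + chi (univ ∆ S) R) - (chi univ R + chi S R) := by
    intro R
    calc (1 - chi univ R) * (1 - chi S R)
        = (1 + chi univ R * chi S R) - (chi univ R + chi S R) := by ring
      _ = (1 + chi (univ ∆ S) R) - (chi univ R + chi S R) := by rw [chi_mul]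
  rw [sum_congr rfl fun R _ => expand R, Finset.sum_sub_distrib, Finset.sum_add_distrib,
    Finset.sum_add_distrib, sum_chi, sum_chi, sum_chi, univ_symmDiff,
    if_neg (compl_ne_empty h2), if_neg hU, if_neg h1]
  simp [Fintype.card_finset]

lemma symmDiff_empty_iff (V W : Finset α) : V ∆ W = ∅ ↔ W = V := by
  rw [← Finset.bot_eq_empty, symmDiff_eq_bot]
  exact eq_comm

lemma sum_odds_chi_eodd (C S : Finset α) (hC1 : C ≠ ∅) (hC2 : C ≠ univ)
    (hS1 : S ≠ ∅) (hS2 : S ≠ univ) :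
    (4:ℤ) * ∑ R ∈ Odds α, (-chi C R) * eodd S R
      = 2 ^ Fintype.card α * ((if S = C then (1:ℤ) else 0) - (if S = Cᶜ then 1 else 0)) := by
  have step : (4:ℤ) * ∑ R ∈ Odds α, (-chi C R) * eodd S R
      = ∑ R : Finset α, (1 - chi univ R) * ((-chi C R) * (1 - chi S R)) := by
    have h2m := two_mul_sum_odds (fun R => (-chi C R) * eodd S R)
    calc (4:ℤ) * ∑ R ∈ Odds α, (-chi C R) * eodd S R
        = 2 * (2 * ∑ R ∈ Odds α, (-chi C R) * eodd S R) := by ring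
      _ = 2 * ∑ R : Finset α, (1 - chi univ R) * ((-chi C R) * eodd S R) := by rw [h2m]
      _ = ∑ R : Finset α, 2 * ((1 - chi univ R) * ((-chi C R) * eodd S R)) := by
          rw [Finset.mul_sum]
      _ = ∑ R : Finset α, (1 - chi univ R) * ((-chi C R) * (1 - chi S R)) := by
          refine sum_congr rfl fun R _ => ?_
          rw [← two_mul_eodd S R]; ring
  rw [step]
  have expand : ∀ R : Finset α, (1 - chi univ R) * ((-chi C R) * (1 - chi S R))
      = (chi Cᶜ R + chi (C ∆ S) R) - (chi C R + chi (Cᶜ ∆ S) R) := by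
    intro R
    have h1 : chi univ R * chi C R = chi Cᶜ R := by rw [chi_mul, univ_symmDiff]
    have h2 : chi C R * chi S R = chi (C ∆ S) R := chi_mul _ _ _
    have h3 : chi Cᶜ R * chi S R = chi (Cᶜ ∆ S) R := chi_mul _ _ _
    calc (1 - chi univ R) * ((-chi C R) * (1 - chi S R))
        = (chi univ R * chi C R + chi C R * chi S R)
            - (chi C R + chi univ R * chi C R * chi S R) := by ring
      _ = (chi Cᶜ R + chi (C ∆ S) R) - (chi C R + chi Cᶜ R * chi S R) := by rw [h1, h2]
      _ = (chi Cᶜ R + chi (C ∆ S) R) - (chi C R + chi (Cᶜ ∆ S) R) := by rw [h3]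
  rw [sum_congr rfl fun R _ => expand R, Finset.sum_sub_distrib, Finset.sum_add_distrib,
    Finset.sum_add_distrib, sum_chi, sum_chi, sum_chi, sum_chi,
    if_neg (compl_ne_empty hC2), if_neg hC1]
  have e1 : ((C ∆ S = ∅) = (S = C)) := propext (symmDiff_empty_iff C S)
  have e2 : ((Cᶜ ∆ S = ∅) = (S = Cᶜ)) := propext (symmDiff_empty_iff Cᶜ S)
  simp only [e1, e2]
  split_ifs <;> ring

end Stmt16Aux

namespace Stmt16Aux

/-- the factor appearing in the index -/
def fct {α : Type*} [Fintype α] [DecidableEq α] (C S : Finset α) : ℤ :=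
  if C = univ then 1 else ((if S = C then (1:ℤ) else 0) - (if S = Cᶜ then 1 else 0))

/-- the test function -/
def sig {α : Type*} [Fintype α] [DecidableEq α] (C R : Finset α) : ℤ :=
  if C = univ then 1 else -chi C R

set_option maxHeartbeats 1600000 in
theorem core {d : ℕ} (X : Fin d → Type*) [∀ i, Fintype (X i)] [∀ i, DecidableEq (X i)]
    (𝓕 : Finset (∀ i, Finset (X i)))
    (h𝓕p : ∀ A ∈ 𝓕, ∀ i, (A i).Nonempty ∧ A i ≠ Finset.univ)
    (h𝓕d : ∀ A ∈ 𝓕, ∀ B ∈ 𝓕, A ≠ B → ∃ i, A i = (B i)ᶜ)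
    (h𝓕u : ∀ x : ∀ i, X i, ∃ A ∈ 𝓕, ∀ i, x i ∈ A i)
    (C : ∀ i, Finset (X i)) (hCne : ∀ i, (C i).Nonempty) (hC : ∃ i, C i ≠ Finset.univ) :
    (∑ A ∈ 𝓕, ∏ i, fct (C i) (A i)) = 0 := by
  classical
  -- counting identity
  have hcount : ∀ R : ∀ i, Finset (X i),
      (∑ A ∈ 𝓕, ∏ i, (A i ∩ R i).card) = ∏ i, (R i).card := by
    intro R
    have hbU : Fintype.piFinset (fun i => R i) =
        𝓕.biUnion (fun A => Fintype.piFinset (fun i => A i ∩ R i)) := by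
      ext x
      simp only [Fintype.mem_piFinset, mem_biUnion, mem_inter]
      constructor
      · intro hx
        obtain ⟨A, hA, hxA⟩ := h𝓕u x
        exact ⟨A, hA, fun i => ⟨hxA i, hx i⟩⟩
      · rintro ⟨A, _, hxA⟩ i
        exact (hxA i).2
    have hdisj : ∀ A ∈ 𝓕, ∀ B ∈ 𝓕, A ≠ B →
        Disjoint (Fintype.piFinset (fun i => A i ∩ R i))
          (Fintype.piFinset (fun i => B i ∩ R i)) := by
      intro A hA B hB hAB
      rw [Finset.disjoint_left]
      intro x hxA hxB
      obtain ⟨i, hi⟩ := h𝓕d A hA B hB hAB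
      have h1 : x i ∈ A i ∩ R i := (Fintype.mem_piFinset.mp hxA) i
      have h2 : x i ∈ B i ∩ R i := (Fintype.mem_piFinset.mp hxB) i
      have h3 : x i ∈ (B i)ᶜ := hi ▸ (mem_inter.mp h1).1
      exact (Finset.mem_compl.mp h3) (mem_inter.mp h2).1
    calc ∑ A ∈ 𝓕, ∏ i, (A i ∩ R i).card
        = ∑ A ∈ 𝓕, (Fintype.piFinset (fun i => A i ∩ R i)).card := by
          exact sum_congr rfl fun A _ => (Fintype.card_piFinset _).symm
      _ = (𝓕.biUnion (fun A => Fintype.piFinset (fun i => A i ∩ R i))).card :=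
          (Finset.card_biUnion hdisj).symm
      _ = (Fintype.piFinset (fun i => R i)).card := by rw [← hbU]
      _ = ∏ i, (R i).card := Fintype.card_piFinset _
  -- exactly one box with all odd intersections
  have hN : ∀ R : ∀ i, Finset (X i), (∀ i, Odd (R i).card) →
      (𝓕.filter (fun A => ∀ i, Odd ((A i ∩ R i).card))).card = 1 := by
    intro R hR
    have hodd : Odd (∏ i, (R i).card) := by
      refine Finset.prod_induction _ Odd (fun a b ha hb => ha.mul hb) odd_one
        (fun i _ => hR i)
    have hex : ∃ A ∈ 𝓕, ∀ i, Odd ((A i ∩ R i).card) := by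
      by_contra hno
      push_neg at hno
      have heven : ∀ A ∈ 𝓕, 2 ∣ ∏ i, (A i ∩ R i).card := by
        intro A hA
        obtain ⟨i, hi⟩ := hno A hA
        have h4 : 2 ∣ (A i ∩ R i).card := (Nat.not_odd_iff_even.mp hi).two_dvd
        exact h4.trans (Finset.dvd_prod_of_mem _ (mem_univ i))
      have h5 : 2 ∣ ∑ A ∈ 𝓕, ∏ i, (A i ∩ R i).card := Finset.dvd_sum heven
      rw [hcount R] at h5
      rw [Nat.odd_iff] at hodd
      omega
    obtain ⟨A₀, hA₀, hA₀odd⟩ := hex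
    rw [Finset.card_eq_one]
    refine ⟨A₀, ?_⟩
    ext B
    simp only [Finset.mem_filter, Finset.mem_singleton]
    constructor
    · rintro ⟨hB, hBodd⟩
      by_contra hne
      obtain ⟨i, hi⟩ := h𝓕d B hB A₀ hA₀ hne
      have hsub : A₀ i ∩ R i ⊆ R i := inter_subset_right
      have hle := Finset.card_le_card hsub
      have h6 : B i ∩ R i = R i \ (A₀ i ∩ R i) := by
        ext x
        simp only [mem_inter, mem_sdiff, hi, Finset.mem_compl]
        tauto
      have h7 : (B i ∩ R i).card = (R i).card - (A₀ i ∩ R i).card := by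
        rw [h6, card_sdiff_of_subset hsub]
      have o1 := hBodd i; have o2 := hA₀odd i; have o3 := hR i
      rw [Nat.odd_iff] at o1 o2 o3
      omega
    · rintro rfl; exact ⟨hA₀, hA₀odd⟩
  -- unit-sum form
  have hN' : ∀ R ∈ Fintype.piFinset (fun i => Odds (X i)),
      (∑ A ∈ 𝓕, ∏ i, eodd (A i) (R i)) = 1 := by
    intro R hR
    have hRodd : ∀ i, Odd (R i).card := by
      intro i
      have h8 := (Fintype.mem_piFinset.mp hR) i
      exact (Finset.mem_filter.mp h8).2
    have h9 : ∀ A : ∀ i, Finset (X i), (∏ i, eodd (A i) (R i))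
        = if (∀ i, Odd ((A i ∩ R i).card)) then (1:ℤ) else 0 := by
      intro A
      by_cases h : ∀ i, Odd ((A i ∩ R i).card)
      · rw [if_pos h]
        refine Finset.prod_eq_one fun i _ => ?_
        unfold eodd; rw [if_pos (h i)]
      · rw [if_neg h]
        push_neg at h
        obtain ⟨i, hi⟩ := h
        refine Finset.prod_eq_zero (mem_univ i) ?_
        unfold eodd; rw [if_neg hi]
    calc ∑ A ∈ 𝓕, ∏ i, eodd (A i) (R i)
        = ∑ A ∈ 𝓕, if (∀ i, Odd ((A i ∩ R i).card)) then (1:ℤ) else 0 :=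
          sum_congr rfl fun A _ => h9 A
      _ = ((𝓕.filter (fun A => ∀ i, Odd ((A i ∩ R i).card))).card : ℤ) :=
          Finset.sum_boole (fun A => ∀ i, Odd ((A i ∩ R i).card)) 𝓕
      _ = 1 := by rw [hN R hRodd]; norm_num
  -- the swap
  have hswap : (∏ i, ∑ R ∈ Odds (X i), sig (C i) R)
      = ∑ A ∈ 𝓕, ∏ i, (∑ R ∈ Odds (X i), sig (C i) R * eodd (A i) R) := by
    rw [Finset.prod_univ_sum]
    calc ∑ p ∈ Fintype.piFinset (fun i => Odds (X i)), ∏ i, sig (C i) (p i)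
        = ∑ p ∈ Fintype.piFinset (fun i => Odds (X i)),
            ∑ A ∈ 𝓕, ∏ i, (sig (C i) (p i) * eodd (A i) (p i)) := by
          refine sum_congr rfl fun p hp => ?_
          calc ∏ i, sig (C i) (p i)
              = (∏ i, sig (C i) (p i)) * ∑ A ∈ 𝓕, ∏ i, eodd (A i) (p i) := by
                rw [hN' p hp, mul_one]
            _ = ∑ A ∈ 𝓕, (∏ i, sig (C i) (p i)) * ∏ i, eodd (A i) (p i) := by
                rw [Finset.mul_sum]
            _ = ∑ A ∈ 𝓕, ∏ i, (sig (C i) (p i) * eodd (A i) (p i)) := by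
                exact sum_congr rfl fun A _ => (Finset.prod_mul_distrib).symm
      _ = ∑ A ∈ 𝓕, ∑ p ∈ Fintype.piFinset (fun i => Odds (X i)),
            ∏ i, (sig (C i) (p i) * eodd (A i) (p i)) := Finset.sum_comm
      _ = ∑ A ∈ 𝓕, ∏ i, (∑ R ∈ Odds (X i), sig (C i) R * eodd (A i) R) := by
          exact sum_congr rfl fun A _ =>
            (Finset.prod_univ_sum (fun i => Odds (X i))
              (fun i R => sig (C i) R * eodd (A i) R)).symm
  -- left side vanishes
  have hzero : (∏ i, ∑ R ∈ Odds (X i), sig (C i) R) = 0 := by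
    obtain ⟨i₀, hi₀⟩ := hC
    apply Finset.prod_eq_zero (mem_univ i₀)
    have h10 : ∀ R : Finset (X i₀), sig (C i₀) R = -chi (C i₀) R := fun R => if_neg hi₀
    rw [sum_congr rfl fun R _ => h10 R, Finset.sum_neg_distrib,
      sum_odds_chi (C i₀) (nonempty_iff_ne_empty.mp (hCne i₀)) hi₀, neg_zero]
  -- coordinatewise evaluation
  have heval : ∀ A ∈ 𝓕, ∀ i : Fin d,
      (4:ℤ) * (∑ R ∈ Odds (X i), sig (C i) R * eodd (A i) R)
        = 2 ^ (Fintype.card (X i)) * fct (C i) (A i) := by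
    intro A hA i
    obtain ⟨hne, hprop⟩ := h𝓕p A hA i
    by_cases hCi : C i = univ
    · have h11 : ∀ R : Finset (X i), sig (C i) R * eodd (A i) R = eodd (A i) R := by
        intro R; rw [sig, if_pos hCi, one_mul]
      rw [sum_congr rfl fun R _ => h11 R, fct, if_pos hCi, mul_one]
      exact sum_odds_eodd (A i) (nonempty_iff_ne_empty.mp hne) hprop
    · have h12 : ∀ R : Finset (X i), sig (C i) R * eodd (A i) R
          = (-chi (C i) R) * eodd (A i) R := by
        intro R; rw [sig, if_neg hCi]
      rw [sum_congr rfl fun R _ => h12 R, fct, if_neg hCi]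
      exact sum_odds_chi_eodd (C i) (A i) (nonempty_iff_ne_empty.mp (hCne i)) hCi
        (nonempty_iff_ne_empty.mp hne) hprop
  -- combine
  have hfinal : (∏ i, (2:ℤ) ^ (Fintype.card (X i))) * (∑ A ∈ 𝓕, ∏ i, fct (C i) (A i)) = 0 := by
    calc (∏ i, (2:ℤ) ^ (Fintype.card (X i))) * ∑ A ∈ 𝓕, ∏ i, fct (C i) (A i)
        = ∑ A ∈ 𝓕, ∏ i, ((2:ℤ) ^ (Fintype.card (X i)) * fct (C i) (A i)) := by
          rw [Finset.mul_sum]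
          exact sum_congr rfl fun A _ => (Finset.prod_mul_distrib).symm
      _ = ∑ A ∈ 𝓕, ∏ i, ((4:ℤ) * (∑ R ∈ Odds (X i), sig (C i) R * eodd (A i) R)) := by
          exact sum_congr rfl fun A hA => prod_congr rfl fun i _ => (heval A hA i).symm
      _ = ∑ A ∈ 𝓕, (∏ _i : Fin d, (4:ℤ)) * ∏ i, (∑ R ∈ Odds (X i), sig (C i) R * eodd (A i) R) := by
          exact sum_congr rfl fun A _ => Finset.prod_mul_distrib
      _ = (∏ _i : Fin d, (4:ℤ)) * ∑ A ∈ 𝓕, ∏ i, (∑ R ∈ Odds (X i), sig (C i) R * eodd (A i) R) := by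
          rw [Finset.mul_sum]
      _ = (∏ _i : Fin d, (4:ℤ)) * (∏ i, ∑ R ∈ Odds (X i), sig (C i) R) := by rw [← hswap]
      _ = 0 := by rw [hzero, mul_zero]
  have hpow : (∏ i, (2:ℤ) ^ (Fintype.card (X i))) ≠ 0 := by
    refine Finset.prod_ne_zero_iff.mpr fun i _ => ?_
    positivity
  rcases mul_eq_zero.mp hfinal with h | h
  · exact absurd h hpow
  · exact h

end Stmt16Aux

open Finset Stmt16Aux in
/-- for a proper suit `𝓕` of the whole `d`-box `X` and any box
`C` (nonempty factors) with some `Cᵢ ≠ Xᵢ`, the index of `𝓕` relative to `C`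
vanishes; in particular when `C` is proper, the number of members of `𝓕` of the
form `C^ε` is even. -/
theorem stmt_16 {d : ℕ} (X : Fin d → Type*) [∀ i, Fintype (X i)] [∀ i, DecidableEq (X i)]
    (hX : ∀ i, 2 ≤ Fintype.card (X i))
    (𝓕 : Finset (∀ i, Finset (X i)))
    (h𝓕p : ∀ A ∈ 𝓕, ∀ i, (A i).Nonempty ∧ A i ≠ Finset.univ)
    (h𝓕d : ∀ A ∈ 𝓕, ∀ B ∈ 𝓕, A ≠ B → ∃ i, A i = (B i)ᶜ)
    (h𝓕u : ∀ x : ∀ i, X i, ∃ A ∈ 𝓕, ∀ i, x i ∈ A i)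
    (C : ∀ i, Finset (X i)) (hCne : ∀ i, (C i).Nonempty) (hC : ∃ i, C i ≠ Finset.univ) :
    (∑ A ∈ 𝓕, ∏ i,
        ((if A i = C i then (1 : ℤ) else 0) - (if A i = (C i)ᶜ then 1 else 0)
          + (if C i = Finset.univ then 1 else 0))) = 0 ∧
    ((∀ i, C i ≠ Finset.univ) →
      Even (𝓕.filter (fun A => ∀ i, A i = C i ∨ A i = (C i)ᶜ)).card) := by
  classical
  have hcore := core X 𝓕 h𝓕p h𝓕d h𝓕u C hCne hC
  have hconv : ∀ A ∈ 𝓕, ∀ i : Fin d,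
      ((if A i = C i then (1 : ℤ) else 0) - (if A i = (C i)ᶜ then 1 else 0)
        + (if C i = Finset.univ then 1 else 0)) = fct (C i) (A i) := by
    intro A hA i
    by_cases hCi : C i = univ
    · have h1 : A i ≠ C i := by rw [hCi]; exact (h𝓕p A hA i).2
      have h2 : A i ≠ (C i)ᶜ := by
        rw [hCi, compl_univ]
        exact nonempty_iff_ne_empty.mp (h𝓕p A hA i).1
      rw [fct, if_pos hCi, if_neg h1, if_neg h2, if_pos hCi]
      ring
    · rw [fct, if_neg hCi, if_neg hCi]
      ring
  constructor
  · calc (∑ A ∈ 𝓕, ∏ i,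
        ((if A i = C i then (1 : ℤ) else 0) - (if A i = (C i)ᶜ then 1 else 0)
          + (if C i = Finset.univ then 1 else 0)))
        = ∑ A ∈ 𝓕, ∏ i, fct (C i) (A i) :=
          Finset.sum_congr rfl fun A hA => Finset.prod_congr rfl fun i _ => hconv A hA i
      _ = 0 := hcore
  · intro hCall
    have hrestrict : ∑ A ∈ 𝓕.filter (fun A => ∀ i, A i = C i ∨ A i = (C i)ᶜ),
        ∏ i, fct (C i) (A i) = 0 := by
      rw [Finset.sum_filter_of_ne, hcore]
      intro A hA hne i
      by_contra hni
      push_neg at hni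
      apply hne
      apply Finset.prod_eq_zero (mem_univ i)
      rw [fct, if_neg (hCall i), if_neg hni.1, if_neg hni.2]
      ring
    have hCC : ∀ i : Fin d, C i ≠ (C i)ᶜ := by
      intro i h
      obtain ⟨c, hc⟩ := hCne i
      have hc' : c ∈ (C i)ᶜ := h ▸ hc
      exact (Finset.mem_compl.mp hc') hc
    have hunit : ∀ A ∈ 𝓕.filter (fun A => ∀ i, A i = C i ∨ A i = (C i)ᶜ),
        (∏ i, fct (C i) (A i)) = 1 ∨ (∏ i, fct (C i) (A i)) = -1 := by
      intro A hA
      have hal := (Finset.mem_filter.mp hA).2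
      refine Finset.prod_induction _ (fun x => x = 1 ∨ x = -1) ?_ (Or.inl rfl) ?_
      · rintro a b (rfl | rfl) (rfl | rfl) <;> norm_num
      · intro i _
        rcases hal i with h | h
        · left
          have h2 : A i ≠ (C i)ᶜ := by rw [h]; exact hCC i
          rw [fct, if_neg (hCall i), if_pos h, if_neg h2]
          ring
        · right
          have h2 : A i ≠ C i := by rw [h]; exact (hCC i).symm
          rw [fct, if_neg (hCall i), if_neg h2, if_pos h]
          ring
    have hdvd : (2:ℤ) ∣ ((𝓕.filter (fun A => ∀ i, A i = C i ∨ A i = (C i)ᶜ)).card : ℤ) := by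
      have h1 : ((𝓕.filter (fun A => ∀ i, A i = C i ∨ A i = (C i)ᶜ)).card : ℤ)
          = ∑ _A ∈ 𝓕.filter (fun A => ∀ i, A i = C i ∨ A i = (C i)ᶜ), (1:ℤ) := by
        simp
      have h2 : ∑ _A ∈ 𝓕.filter (fun A => ∀ i, A i = C i ∨ A i = (C i)ᶜ), (1:ℤ)
          = ∑ A ∈ 𝓕.filter (fun A => ∀ i, A i = C i ∨ A i = (C i)ᶜ),
              ((1:ℤ) - ∏ i, fct (C i) (A i)) := by
        rw [Finset.sum_sub_distrib, hrestrict, sub_zero]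
      rw [h1, h2]
      refine Finset.dvd_sum fun A hA => ?_
      rcases hunit A hA with h | h <;> rw [h] <;> norm_num
    have heven : Even ((𝓕.filter (fun A => ∀ i, A i = C i ∨ A i = (C i)ᶜ)).card : ℤ) := by
      obtain ⟨k, hk⟩ := hdvd
      exact ⟨k, by linarith⟩
    exact Int.even_coe_nat _ |>.mp heven
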